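/- For the DPRH model, P(Y₁ > Y₂) = ∫_a^b ∫_a^{y₁} f(y₁,y₂) dy₂ dy₁ = θ₁/(θ₁+θ₂) and P(Y₂ > Y₁) = ∫_a^b ∫_a^{y₂} f(y₁,y₂) dy₁ dy₂ = θ₂/(θ₁+θ₂). -/

import Mathlib

open MeasureTheory Set

noncomputable def dprh (a b : ℝ) (F₀ f₀ : ℝ → ℝ) (θ₁ θ₂ θ₁' θ₂' : ℝ) (y₁ y₂ : ℝ) : ℝ :=
  if a < y₁ ∧ y₁ < y₂ ∧ y₂ < b then
    θ₁' * θ₂ * f₀ y₁ * f₀ y₂ * F₀ y₁ ^ (θ₁' - 1) * F₀ y₂ ^ (θ₁ + θ₂ - θ₁' - 1)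
  else if a < y₂ ∧ y₂ < y₁ ∧ y₁ < b then
    θ₁ * θ₂' * f₀ y₁ * f₀ y₂ * F₀ y₁ ^ (θ₁ + θ₂ - θ₂' - 1) * F₀ y₂ ^ (θ₂' - 1)
  else 0

noncomputable def antider (a b : ℝ) (F₀ : ℝ → ℝ) (p : ℝ) (y : ℝ) : ℝ :=
  if y ≤ a then 0 else if y < b then F₀ y ^ p / p else 1 / p

lemma antider_key (a b : ℝ) (hab : a < b) (F₀ f₀ : ℝ → ℝ)
    (hderiv : ∀ y ∈ Ioo a b, HasDerivAt F₀ (f₀ y) y)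
    (hf₀pos : ∀ y ∈ Ioo a b, 0 ≤ f₀ y)
    (hF₀pos : ∀ y ∈ Ioo a b, 0 < F₀ y)
    (hFa : Filter.Tendsto F₀ (nhdsWithin a (Ioi a)) (nhds 0))
    (hFb : Filter.Tendsto F₀ (nhdsWithin b (Iio b)) (nhds 1))
    (p : ℝ) (hp : 0 < p) (c : ℝ) (hc : c ∈ Ioc a b) :
    (∫ y in a..c, Set.indicator (Ioo a b) (fun y => f₀ y * F₀ y ^ (p - 1)) y)
      = antider a b F₀ p c := by
  set g : ℝ → ℝ := Set.indicator (Ioo a b) (fun y => f₀ y * F₀ y ^ (p - 1)) with hg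
  set H : ℝ → ℝ := antider a b F₀ p with hH
  -- derivative of H on Ioo a b
  have hHderiv : ∀ x ∈ Ioo a b, HasDerivAt H (g x) x := by
    intro x hx
    have h1 : HasDerivAt (fun y => F₀ y ^ p / p) (f₀ x * F₀ x ^ (p - 1)) x := by
      have h2 := (Real.hasDerivAt_rpow_const (x := F₀ x) (p := p)
        (Or.inl (hF₀pos x hx).ne')).comp x (hderiv x hx)
      have h3 := h2.div_const p
      refine h3.congr_deriv ?_
      rw [div_eq_iff hp.ne']
      ring
    have heq : H =ᶠ[nhds x] fun y => F₀ y ^ p / p := by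
      filter_upwards [isOpen_Ioo.mem_nhds hx] with y hy
      simp [hH, antider, not_le.mpr hy.1, hy.2]
    have := h1.congr_of_eventuallyEq heq
    rwa [hg, Set.indicator_of_mem hx]
  -- continuity of H on Icc a b
  have hHcont : ContinuousOn H (Icc a b) := by
    intro x hx
    rcases eq_or_lt_of_le hx.1 with h1 | h1
    · cases h1
      have hval : H a = 0 := if_pos le_rfl
      rw [ContinuousWithinAt, hval]
      have hmono' : nhdsWithin a (Icc a b) ≤ nhdsWithin a (insert a (Ioi a)) := by
        apply nhdsWithin_mono
        intro y hy
        rcases eq_or_lt_of_le hy.1 with h | h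
        · exact Or.inl h.symm
        · exact Or.inr h
      refine Filter.Tendsto.mono_left ?_ hmono'
      rw [nhdsWithin_insert]
      refine Filter.Tendsto.sup ?_ ?_
      · simpa [hval] using (tendsto_pure_nhds H a)
      · have hev : (fun y => F₀ y ^ p / p) =ᶠ[nhdsWithin a (Ioi a)] H := by
          have hb : Iio b ∈ nhdsWithin a (Ioi a) := nhdsWithin_le_nhds (Iio_mem_nhds hab)
          filter_upwards [hb, self_mem_nhdsWithin] with y hy1 hy2
          have hy1' : y < b := hy1
          have hy2' : a < y := hy2
          simp [hH, antider, not_le.mpr hy2', hy1']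
        have hT : Filter.Tendsto (fun y => F₀ y ^ p / p) (nhdsWithin a (Ioi a)) (nhds 0) := by
          have := (hFa.rpow_const (Or.inr hp.le)).div_const p
          simpa [Real.zero_rpow hp.ne'] using this
        exact hT.congr' hev
    · rcases eq_or_lt_of_le hx.2 with h2 | h2
      · cases h2
        have hval : H b = 1 / p := by
          simp [hH, antider, not_le.mpr h1, lt_irrefl]
        rw [ContinuousWithinAt, hval]
        have hmono' : nhdsWithin b (Icc a b) ≤ nhdsWithin b (insert b (Iio b)) := by
          apply nhdsWithin_mono
          intro y hy
          rcases eq_or_lt_of_le hy.2 with h | h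
          · exact Or.inl h
          · exact Or.inr h
        refine Filter.Tendsto.mono_left ?_ hmono'
        rw [nhdsWithin_insert]
        refine Filter.Tendsto.sup ?_ ?_
        · simpa [hval] using (tendsto_pure_nhds H b)
        · have hev : (fun y => F₀ y ^ p / p) =ᶠ[nhdsWithin b (Iio b)] H := by
            have hb : Ioi a ∈ nhdsWithin b (Iio b) := nhdsWithin_le_nhds (Ioi_mem_nhds h1)
            filter_upwards [hb, self_mem_nhdsWithin] with y hy1 hy2
            have hy1' : a < y := hy1
            have hy2' : y < b := hy2
            simp [hH, antider, not_le.mpr hy1', hy2']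
          have hT : Filter.Tendsto (fun y => F₀ y ^ p / p) (nhdsWithin b (Iio b)) (nhds (1/p)) := by
            have := (hFb.rpow_const (Or.inr hp.le)).div_const p
            simpa [Real.one_rpow] using this
          exact hT.congr' hev
      · exact ((hHderiv x ⟨h1, h2⟩).continuousAt).continuousWithinAt
  have hgpos : ∀ x, 0 ≤ g x := by
    intro x
    apply Set.indicator_nonneg
    intro y hy
    exact mul_nonneg (hf₀pos y hy) (Real.rpow_nonneg (hF₀pos y hy).le _)
  have hint : IntegrableOn g (Ioc a b) :=
    intervalIntegral.integrableOn_deriv_of_nonneg hHcont hHderiv (fun x hx => hgpos x)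
  have hint' : IntervalIntegrable g volume a c := by
    rw [intervalIntegrable_iff_integrableOn_Ioc_of_le hc.1.le]
    exact hint.mono_set (Ioc_subset_Ioc_right hc.2)
  have hres := intervalIntegral.integral_eq_sub_of_hasDeriv_right_of_le hc.1.le
    (hHcont.mono (Icc_subset_Icc_right hc.2))
    (fun x hx => (hHderiv x ⟨hx.1, hx.2.trans_le hc.2⟩).hasDerivWithinAt)
    hint'
  rw [hres]
  have h0 : H a = 0 := if_pos le_rfl
  rw [h0, sub_zero]

lemma ae_ne_point (y : ℝ) : ∀ᵐ x : ℝ, x ≠ y := by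
  refine MeasureTheory.ae_iff.mpr ?_
  have : {x : ℝ | ¬ x ≠ y} = {y} := by ext x; simp
  rw [this]
  exact measure_singleton y

theorem dprh_prob_order
    (a b : ℝ) (hab : a < b) (F₀ f₀ : ℝ → ℝ)
    (hderiv : ∀ y ∈ Ioo a b, HasDerivAt F₀ (f₀ y) y)
    (hf₀cont : ContinuousOn f₀ (Ioo a b))
    (hmono : StrictMonoOn F₀ (Ioo a b))
    (hf₀pos : ∀ y ∈ Ioo a b, 0 < f₀ y)
    (hF₀pos : ∀ y ∈ Ioo a b, 0 < F₀ y)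
    (hF₀lt1 : ∀ y ∈ Ioo a b, F₀ y < 1)
    (hFa : Filter.Tendsto F₀ (nhdsWithin a (Ioi a)) (nhds 0))
    (hFb : Filter.Tendsto F₀ (nhdsWithin b (Iio b)) (nhds 1))
    (θ₁ θ₂ θ₁' θ₂' : ℝ) (hθ₁ : 0 < θ₁) (hθ₂ : 0 < θ₂) (hθ₁' : 0 < θ₁') (hθ₂' : 0 < θ₂')
    :
    (∫ y₁ in a..b, ∫ y₂ in a..y₁, dprh a b F₀ f₀ θ₁ θ₂ θ₁' θ₂' y₁ y₂) = θ₁ / (θ₁ + θ₂) ∧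
    (∫ y₂ in a..b, ∫ y₁ in a..y₂, dprh a b F₀ f₀ θ₁ θ₂ θ₁' θ₂' y₁ y₂) = θ₂ / (θ₁ + θ₂) := by
  have key := antider_key a b hab F₀ f₀ hderiv (fun y hy => (hf₀pos y hy).le) hF₀pos hFa hFb
  have hθ₁₂ : 0 < θ₁ + θ₂ := by positivity
  have hantb : ∀ p : ℝ, antider a b F₀ p b = 1 / p := by
    intro p; simp [antider, not_le.mpr hab, lt_irrefl]
  have hantmid : ∀ p : ℝ, ∀ y ∈ Ioo a b, antider a b F₀ p y = F₀ y ^ p / p := by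
    intro p y hy; simp [antider, not_le.mpr hy.1, hy.2]
  constructor
  · -- P(Y₁ > Y₂)
    have hinner : ∀ y₁ ∈ Ioo a b,
        (∫ y₂ in a..y₁, dprh a b F₀ f₀ θ₁ θ₂ θ₁' θ₂' y₁ y₂)
          = θ₁ * (f₀ y₁ * F₀ y₁ ^ (θ₁ + θ₂ - 1)) := by
      intro y₁ hy₁
      have hcongr : (∫ y₂ in a..y₁, dprh a b F₀ f₀ θ₁ θ₂ θ₁' θ₂' y₁ y₂)
          = ∫ y₂ in a..y₁, (θ₁ * θ₂' * f₀ y₁ * F₀ y₁ ^ (θ₁ + θ₂ - θ₂' - 1)) *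
              Set.indicator (Ioo a b) (fun y => f₀ y * F₀ y ^ (θ₂' - 1)) y₂ := by
        apply intervalIntegral.integral_congr_ae
        filter_upwards [ae_ne_point y₁] with x hxne hmem
        rw [uIoc_of_le hy₁.1.le] at hmem
        have hx1 : a < x := hmem.1
        have hx2 : x < y₁ := lt_of_le_of_ne hmem.2 hxne
        have hno : ¬(a < y₁ ∧ y₁ < x ∧ x < b) := fun h => absurd h.2.1 (not_lt.mpr hx2.le)
        rw [dprh, if_neg hno, if_pos ⟨hx1, hx2, hy₁.2⟩,
          Set.indicator_of_mem (show x ∈ Ioo a b from ⟨hx1, hx2.trans hy₁.2⟩)]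
        ring
      rw [hcongr, intervalIntegral.integral_const_mul,
        key θ₂' hθ₂' y₁ (mem_Ioc.mpr ⟨hy₁.1, hy₁.2.le⟩), hantmid θ₂' y₁ hy₁]
      have hFp := hF₀pos y₁ hy₁
      have hmul : F₀ y₁ ^ (θ₁ + θ₂ - 1) = F₀ y₁ ^ (θ₁ + θ₂ - θ₂' - 1) * F₀ y₁ ^ θ₂' := by
        rw [← Real.rpow_add hFp]; congr 1; ring
      rw [hmul]
      field_simp
    have houter : (∫ y₁ in a..b, ∫ y₂ in a..y₁, dprh a b F₀ f₀ θ₁ θ₂ θ₁' θ₂' y₁ y₂)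
        = ∫ y₁ in a..b, θ₁ *
            Set.indicator (Ioo a b) (fun y => f₀ y * F₀ y ^ (θ₁ + θ₂ - 1)) y₁ := by
      apply intervalIntegral.integral_congr_ae
      filter_upwards [ae_ne_point b] with x hxne hmem
      rw [uIoc_of_le hab.le] at hmem
      have hx : x ∈ Ioo a b := ⟨hmem.1, lt_of_le_of_ne hmem.2 hxne⟩
      rw [hinner x hx, Set.indicator_of_mem hx]
    rw [houter, intervalIntegral.integral_const_mul,
      key (θ₁ + θ₂) hθ₁₂ b (mem_Ioc.mpr ⟨hab, le_rfl⟩), hantb, mul_one_div]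
  · -- P(Y₂ > Y₁)
    have hinner : ∀ y₂ ∈ Ioo a b,
        (∫ y₁ in a..y₂, dprh a b F₀ f₀ θ₁ θ₂ θ₁' θ₂' y₁ y₂)
          = θ₂ * (f₀ y₂ * F₀ y₂ ^ (θ₁ + θ₂ - 1)) := by
      intro y₂ hy₂
      have hcongr : (∫ y₁ in a..y₂, dprh a b F₀ f₀ θ₁ θ₂ θ₁' θ₂' y₁ y₂)
          = ∫ y₁ in a..y₂, (θ₁' * θ₂ * f₀ y₂ * F₀ y₂ ^ (θ₁ + θ₂ - θ₁' - 1)) *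
              Set.indicator (Ioo a b) (fun y => f₀ y * F₀ y ^ (θ₁' - 1)) y₁ := by
        apply intervalIntegral.integral_congr_ae
        filter_upwards [ae_ne_point y₂] with x hxne hmem
        rw [uIoc_of_le hy₂.1.le] at hmem
        have hx1 : a < x := hmem.1
        have hx2 : x < y₂ := lt_of_le_of_ne hmem.2 hxne
        rw [dprh, if_pos ⟨hx1, hx2, hy₂.2⟩,
          Set.indicator_of_mem (show x ∈ Ioo a b from ⟨hx1, hx2.trans hy₂.2⟩)]
        ring
      rw [hcongr, intervalIntegral.integral_const_mul,
        key θ₁' hθ₁' y₂ (mem_Ioc.mpr ⟨hy₂.1, hy₂.2.le⟩), hantmid θ₁' y₂ hy₂]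
      have hFp := hF₀pos y₂ hy₂
      have hmul : F₀ y₂ ^ (θ₁ + θ₂ - 1) = F₀ y₂ ^ (θ₁ + θ₂ - θ₁' - 1) * F₀ y₂ ^ θ₁' := by
        rw [← Real.rpow_add hFp]; congr 1; ring
      rw [hmul]
      field_simp
    have houter : (∫ y₂ in a..b, ∫ y₁ in a..y₂, dprh a b F₀ f₀ θ₁ θ₂ θ₁' θ₂' y₁ y₂)
        = ∫ y₂ in a..b, θ₂ *
            Set.indicator (Ioo a b) (fun y => f₀ y * F₀ y ^ (θ₁ + θ₂ - 1)) y₂ := by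
      apply intervalIntegral.integral_congr_ae
      filter_upwards [ae_ne_point b] with x hxne hmem
      rw [uIoc_of_le hab.le] at hmem
      have hx : x ∈ Ioo a b := ⟨hmem.1, lt_of_le_of_ne hmem.2 hxne⟩
      rw [hinner x hx, Set.indicator_of_mem hx]
    rw [houter, intervalIntegral.integral_const_mul,
      key (θ₁ + θ₂) hθ₁₂ b (mem_Ioc.mpr ⟨hab, le_rfl⟩), hantb, mul_one_div]
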